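/- Let X be a random vector in ℝ^d with E‖X‖² < ∞ and mean m, and suppose sup over unit vectors θ of E(⟨θ, X - m⟩²) ≤ v. With ψ(t) = min(t,1), λ > 0, α = ψ(λ‖X‖)/(λ‖X‖) (α = 1 if X = 0), Y = αX, and m̃ = E(Y): for every unit vector θ and every real p ≥ 2, E(⟨θ, Y - m̃⟩²) ≤ v + ⟨θ, m⟩² · (λ^p/(p+1))·(p/(p+1))^p · E(‖X‖^p), provided E(‖X‖^p) < ∞. -/

import Mathlib

open MeasureTheory ProbabilityTheory
open scoped RealInnerProductSpace Classical

lemma key_ineq {p : ℝ} (hp : 2 ≤ p) {s : ℝ} (hs : 0 < s) :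
    1 - min 1 s⁻¹ ≤ (p / (p + 1)) ^ p / (p + 1) * s ^ p := by
  have hp0 : (0:ℝ) < p := by linarith
  have hp1 : (0:ℝ) < p + 1 := by linarith
  have hu : (0:ℝ) < p / (p + 1) := div_pos hp0 hp1
  rcases le_or_gt s 1 with h | h
  · have h1 : (1:ℝ) ≤ s⁻¹ := (one_le_inv₀ hs).mpr h
    rw [min_eq_left h1]
    have : (0:ℝ) ≤ (p / (p + 1)) ^ p / (p + 1) * s ^ p := by positivity
    linarith
  · have hinv : s⁻¹ ≤ 1 := by
      rw [inv_le_one_iff₀]; right; linarith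
    rw [min_eq_right hinv]
    set u : ℝ := p / (p + 1) with hu'
    have hus : 0 < u * s := mul_pos hu hs
    have amgm := Real.geom_mean_le_arith_mean2_weighted
      (by positivity : (0:ℝ) ≤ 1 / (p + 1)) (by positivity : (0:ℝ) ≤ p / (p + 1))
      (by positivity : (0:ℝ) ≤ (u * s) ^ p) (by positivity : (0:ℝ) ≤ (u * s)⁻¹)
      (by field_simp; ring)
    have hgm : ((u * s) ^ p) ^ (1 / (p + 1)) * ((u * s)⁻¹) ^ (p / (p + 1)) = 1 := by
      rw [← Real.rpow_mul hus.le, Real.inv_rpow hus.le,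
        mul_comm p (1 / (p + 1))]
      rw [show 1 / (p + 1) * p = p / (p + 1) by ring]
      exact mul_inv_cancel₀ (ne_of_gt (Real.rpow_pos_of_pos hus _))
    rw [hgm] at amgm
    have hsplit : (u * s) ^ p = u ^ p * s ^ p := Real.mul_rpow hu.le hs.le
    have hw2 : u * (u * s)⁻¹ = s⁻¹ := by
      rw [mul_inv]; field_simp
    rw [hsplit] at amgm
    rw [show p / (p + 1) = u from rfl, hw2] at amgm
    have hre : 1 / (p + 1) * (u ^ p * s ^ p) = u ^ p / (p + 1) * s ^ p := by ring
    linarith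

theorem truncated_second_moment_bound {Ω : Type*} [MeasureSpace Ω]
    [IsProbabilityMeasure (ℙ : Measure Ω)] {d : ℕ}
    (X : Ω → EuclideanSpace ℝ (Fin d)) (hX : MemLp X 2 (ℙ : Measure Ω))
    (m : EuclideanSpace ℝ (Fin d)) (hm : m = ∫ ω, X ω)
    (v : ℝ) (hv : ∀ θ : EuclideanSpace ℝ (Fin d), ‖θ‖ = 1 →
      ∫ ω, ⟪θ, X ω - m⟫ ^ 2 ≤ v)
    (lam : ℝ) (hlam : 0 < lam)
    (Y : Ω → EuclideanSpace ℝ (Fin d))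
    (hY : ∀ ω, Y ω = if X ω = 0 then 0 else
      (min (lam * ‖X ω‖) 1 / (lam * ‖X ω‖)) • X ω)
    (mt : EuclideanSpace ℝ (Fin d)) (hmt : mt = ∫ ω, Y ω)
    (θ : EuclideanSpace ℝ (Fin d)) (hθ : ‖θ‖ = 1)
    (p : ℝ) (hp : 2 ≤ p) (hXp : Integrable (fun ω => ‖X ω‖ ^ p) (ℙ : Measure Ω)) :
    ∫ ω, ⟪θ, Y ω - mt⟫ ^ 2 ≤
      v + ⟪θ, m⟫ ^ 2 * (lam ^ p / (p + 1)) * (p / (p + 1)) ^ p * ∫ ω, ‖X ω‖ ^ p := by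
  have hp0 : (0:ℝ) < p := by linarith
  have hp1 : (0:ℝ) < p + 1 := by linarith
  set c : ℝ := (p / (p + 1)) ^ p / (p + 1) with hc
  have hc0 : 0 ≤ c := by positivity
  -- measurability of Y
  have hXm := hX.aestronglyMeasurable
  have hφ : Measurable (fun x : EuclideanSpace ℝ (Fin d) =>
      if x = 0 then (0 : EuclideanSpace ℝ (Fin d))
      else (min (lam * ‖x‖) 1 / (lam * ‖x‖)) • x) := by
    apply Measurable.ite (measurableSet_eq) measurable_const
    fun_prop
  have hYm : AEStronglyMeasurable Y ℙ := by
    have hYc : Y = (fun x : EuclideanSpace ℝ (Fin d) =>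
        if x = 0 then 0 else (min (lam * ‖x‖) 1 / (lam * ‖x‖)) • x) ∘ X := funext hY
    rw [hYc]
    exact (hφ.comp_aemeasurable hXm.aemeasurable).aestronglyMeasurable
  -- boundedness of Y
  have hYb : ∀ ω, ‖Y ω‖ ≤ lam⁻¹ := by
    intro ω; rw [hY]
    split_ifs with h
    · simp; positivity
    · have ht : 0 < ‖X ω‖ := norm_pos_iff.mpr h
      have hlt : 0 < lam * ‖X ω‖ := mul_pos hlam ht
      rw [norm_smul, Real.norm_eq_abs, abs_of_nonneg (by positivity)]
      calc min (lam * ‖X ω‖) 1 / (lam * ‖X ω‖) * ‖X ω‖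
          ≤ 1 / (lam * ‖X ω‖) * ‖X ω‖ := by
            gcongr; exact min_le_right _ _
        _ = lam⁻¹ := by field_simp [mul_comm]
  have hYL2 : MemLp Y 2 ℙ := MemLp.of_bound hYm lam⁻¹ (ae_of_all _ hYb)
  have hYi : Integrable Y ℙ := hYL2.integrable one_le_two
  -- alpha representation
  set α : Ω → ℝ := fun ω =>
    if X ω = 0 then 1 else min (lam * ‖X ω‖) 1 / (lam * ‖X ω‖) with hα
  have hα0 : ∀ ω, 0 ≤ α ω := by
    intro ω; rw [hα]; dsimp only; split_ifs with h
    · norm_num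
    · have ht : 0 < ‖X ω‖ := norm_pos_iff.mpr h
      have hlt : 0 < lam * ‖X ω‖ := mul_pos hlam ht
      positivity
  have hα1 : ∀ ω, α ω ≤ 1 := by
    intro ω; rw [hα]; dsimp only; split_ifs with h
    · exact le_refl 1
    · have ht : 0 < ‖X ω‖ := norm_pos_iff.mpr h
      have hlt : 0 < lam * ‖X ω‖ := mul_pos hlam ht
      rw [div_le_one hlt]; exact min_le_left _ _
  have hYα : ∀ ω, Y ω = α ω • X ω := by
    intro ω; rw [hY, hα]; dsimp only; split_ifs with h
    · rw [h]; simp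
    · rfl
  -- truncation error bound
  have hαb : ∀ ω, 1 - α ω ≤ c * lam ^ p * ‖X ω‖ ^ p := by
    intro ω; rw [hα]; dsimp only; split_ifs with h
    · simp [h]
      positivity
    · have ht : 0 < ‖X ω‖ := norm_pos_iff.mpr h
      have hlt : 0 < lam * ‖X ω‖ := mul_pos hlam ht
      have hrw : min (lam * ‖X ω‖) 1 / (lam * ‖X ω‖)
          = min 1 (lam * ‖X ω‖)⁻¹ := by
        rw [← min_div_div_right hlt.le, div_self hlt.ne', one_div]
      rw [hrw]
      have := key_ineq hp hlt
      calc 1 - min 1 (lam * ‖X ω‖)⁻¹ ≤ c * (lam * ‖X ω‖) ^ p := this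
        _ = c * lam ^ p * ‖X ω‖ ^ p := by
            rw [Real.mul_rpow hlam.le ht.le]; ring
  -- pointwise bound
  have hptC : ∀ ω, ⟪θ, Y ω - m⟫ ^ 2
      ≤ ⟪θ, X ω - m⟫ ^ 2 + ⟪θ, m⟫ ^ 2 * (c * lam ^ p) * ‖X ω‖ ^ p := by
    intro ω
    have hB : ⟪θ, Y ω - m⟫ ^ 2
        ≤ ⟪θ, X ω - m⟫ ^ 2 + (1 - α ω) * ⟪θ, m⟫ ^ 2 := by
      rw [inner_sub_right, inner_sub_right, hYα ω, inner_smul_right]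
      have h0 := hα0 ω; have h1 := hα1 ω
      nlinarith [mul_nonneg (sub_nonneg.mpr h1) (sq_nonneg (⟪θ, X ω⟫ - ⟪θ, m⟫)),
        mul_nonneg (mul_nonneg (sub_nonneg.mpr h1) h0) (sq_nonneg ⟪θ, X ω⟫)]
    have hC : (1 - α ω) * ⟪θ, m⟫ ^ 2
        ≤ ⟪θ, m⟫ ^ 2 * (c * lam ^ p) * ‖X ω‖ ^ p := by
      have := mul_le_mul_of_nonneg_right (hαb ω) (sq_nonneg ⟪θ, m⟫)
      calc (1 - α ω) * ⟪θ, m⟫ ^ 2 ≤ c * lam ^ p * ‖X ω‖ ^ p * ⟪θ, m⟫ ^ 2 := this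
        _ = ⟪θ, m⟫ ^ 2 * (c * lam ^ p) * ‖X ω‖ ^ p := by ring
    linarith
  -- integrability facts
  have hhInt : Integrable (fun ω => ⟪θ, X ω - m⟫ ^ 2) ℙ :=
    ((hX.sub (memLp_const m)).const_inner θ).integrable_sq
  have hgInt : Integrable (fun ω => ⟪θ, Y ω - m⟫ ^ 2) ℙ :=
    ((hYL2.sub (memLp_const m)).const_inner θ).integrable_sq
  have hfInt : Integrable (fun ω => ⟪θ, Y ω - mt⟫ ^ 2) ℙ :=
    ((hYL2.sub (memLp_const mt)).const_inner θ).integrable_sq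
  have hZL2 : MemLp (fun ω => ⟪θ, Y ω⟫) 2 ℙ := hYL2.const_inner θ
  have hZi : Integrable (fun ω => ⟪θ, Y ω⟫) ℙ := hZL2.integrable one_le_two
  have hZ : ∫ ω, ⟪θ, Y ω⟫ = ⟪θ, mt⟫ := by
    rw [hmt]; exact integral_inner hYi θ
  -- Step A
  have stepA : ∫ ω, ⟪θ, Y ω - mt⟫ ^ 2 ≤ ∫ ω, ⟪θ, Y ω - m⟫ ^ 2 := by
    have hexp : (fun ω => ⟪θ, Y ω - m⟫ ^ 2)
        = fun ω => ⟪θ, Y ω - mt⟫ ^ 2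
          + (2 * (⟪θ, mt⟫ - ⟪θ, m⟫) * ⟪θ, Y ω⟫ + (⟪θ, m⟫ ^ 2 - ⟪θ, mt⟫ ^ 2)) := by
      funext ω; rw [inner_sub_right, inner_sub_right]; ring
    have hI2 : Integrable (fun ω => 2 * (⟪θ, mt⟫ - ⟪θ, m⟫) * ⟪θ, Y ω⟫
        + (⟪θ, m⟫ ^ 2 - ⟪θ, mt⟫ ^ 2)) ℙ :=
      (hZi.const_mul _).add (integrable_const _)
    have : ∫ ω, ⟪θ, Y ω - m⟫ ^ 2
        = (∫ ω, ⟪θ, Y ω - mt⟫ ^ 2) + (⟪θ, mt⟫ - ⟪θ, m⟫) ^ 2 := by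
      rw [hexp, integral_add hfInt hI2, integral_add (hZi.const_mul _) (integrable_const _),
        integral_const_mul, hZ, integral_const]
      simp
      ring
    rw [this]
    nlinarith [sq_nonneg (⟪θ, mt⟫ - ⟪θ, m⟫)]
  -- Step D
  have stepD : ∫ ω, ⟪θ, Y ω - m⟫ ^ 2
      ≤ (∫ ω, ⟪θ, X ω - m⟫ ^ 2) + ⟪θ, m⟫ ^ 2 * (c * lam ^ p) * ∫ ω, ‖X ω‖ ^ p := by
    calc ∫ ω, ⟪θ, Y ω - m⟫ ^ 2
        ≤ ∫ ω, (⟪θ, X ω - m⟫ ^ 2 + ⟪θ, m⟫ ^ 2 * (c * lam ^ p) * ‖X ω‖ ^ p) :=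
          integral_mono hgInt
            (hhInt.add (hXp.const_mul (⟪θ, m⟫ ^ 2 * (c * lam ^ p)))) hptC
      _ = (∫ ω, ⟪θ, X ω - m⟫ ^ 2) + ⟪θ, m⟫ ^ 2 * (c * lam ^ p) * ∫ ω, ‖X ω‖ ^ p := by
          rw [integral_add hhInt (hXp.const_mul (⟪θ, m⟫ ^ 2 * (c * lam ^ p))),
            integral_const_mul]
  have hvv := hv θ hθ
  have hIp : 0 ≤ ∫ ω, ‖X ω‖ ^ p := by
    apply integral_nonneg; intro ω; positivity
  have hconst : ⟪θ, m⟫ ^ 2 * (c * lam ^ p) * ∫ ω, ‖X ω‖ ^ p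
      = ⟪θ, m⟫ ^ 2 * (lam ^ p / (p + 1)) * (p / (p + 1)) ^ p * ∫ ω, ‖X ω‖ ^ p := by
    rw [hc]; ring
  linarith [stepA, stepD]
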